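/- The Whiteman generalized cyclotomic classes of order 2 partition the units modulo N: Z_N^* = D_0 ∪ D_1 and D_0 ∩ D_1 = ∅; in particular each of D_0 and D_1 has exactly e = (p−1)(q−1)/2 elements. -/

import Mathlib

private lemma whiteman_cop_mod (a n : ℕ) : (a % n).Coprime n ↔ a.Coprime n := by
  unfold Nat.Coprime
  rw [← Nat.gcd_rec, Nat.gcd_comm]

/-- For a primitive root mod a prime, powers agree mod `p` iff exponents agree
mod `p - 1`. -/
private lemma whiteman_pow_modEq (p : ℕ) (hp : p.Prime) (g : ℕ)
    (hgp : IsPrimitiveRoot (g : ZMod p) (p - 1)) (a b : ℕ) :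
    g ^ a ≡ g ^ b [MOD p] ↔ a ≡ b [MOD p - 1] := by
  have hpos : 0 < p - 1 := by have := hp.two_le; omega
  obtain ⟨u, hu⟩ := hgp.isUnit hpos.ne'
  have hord : orderOf u = p - 1 := by
    rw [← orderOf_units, hu, ← hgp.eq_orderOf]
  have h1 : (g ^ a ≡ g ^ b [MOD p]) ↔ ((g : ZMod p) ^ a = (g : ZMod p) ^ b) := by
    rw [← Nat.cast_pow, ← Nat.cast_pow, ZMod.natCast_eq_natCast_iff]
  have h2 : ((g : ZMod p) ^ a = (g : ZMod p) ^ b) ↔ (u ^ a = u ^ b) := by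
    rw [← hu]
    constructor
    · intro h; ext; simpa using h
    · intro h; simpa using congrArg Units.val h
  rw [h1, h2, pow_eq_pow_iff_modEq, hord]

theorem whiteman_classes_partition_units
    (p q : ℕ) (hp : p.Prime) (hq : q.Prime) (hpq : p ≠ q)
    (hpo : Odd p) (hqo : Odd q)
    (hgcd : Nat.gcd (p - 1) (q - 1) = 2)
    (g : ℕ)
    (hgp : IsPrimitiveRoot (g : ZMod p) (p - 1))
    (hgq : IsPrimitiveRoot (g : ZMod q) (q - 1))
    (x : ℕ) (hxlt : x < p * q) (hxp : x % p = g % p) (hxq : x % q = 1)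
    (e : ℕ) (he : e = (p - 1) * (q - 1) / 2)
    (D : ℕ → Finset ℕ)
    (hD : ∀ i, D i = (Finset.range e).image (fun s => g ^ s * x ^ i % (p * q))) :
    (Finset.range (p * q)).filter (fun a => Nat.Coprime a (p * q)) = D 0 ∪ D 1 ∧
      D 0 ∩ D 1 = ∅ ∧ (D 0).card = e ∧ (D 1).card = e := by
  have hp1 : 2 ≤ p := hp.two_le
  have hq1 : 2 ≤ q := hq.two_le
  have hcop : Nat.Coprime p q := (Nat.coprime_primes hp hq).mpr hpq
  have hNpos : 0 < p * q := by positivity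
  -- x ≡ g [MOD p] and x ≡ 1 [MOD q]
  have hxp' : x ≡ g [MOD p] := hxp
  have hxq' : x ≡ 1 [MOD q] := by
    show x % q = 1 % q
    rw [hxq, Nat.one_mod_eq_one.mpr (by omega)]
  -- evenness
  have hpeven : 2 ∣ p - 1 := (Nat.Odd.sub_odd hpo odd_one).two_dvd
  have hqeven : 2 ∣ q - 1 := (Nat.Odd.sub_odd hqo odd_one).two_dvd
  -- e = lcm (p-1) (q-1)
  have hprod : 2 ∣ (p - 1) * (q - 1) := hpeven.mul_right _
  have h2e : 2 * e = (p - 1) * (q - 1) := by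
    rw [he, Nat.mul_div_cancel' hprod]
  have hlcm : Nat.lcm (p - 1) (q - 1) = e := by
    have := Nat.gcd_mul_lcm (p - 1) (q - 1)
    rw [hgcd] at this
    omega
  have hepos : 0 < e := by
    have h1 : 0 < (p - 1) * (q - 1) := by
      have : 0 < p - 1 := by omega
      have : 0 < q - 1 := by omega
      positivity
    omega
  -- key congruence characterization
  have key : ∀ s i t j : ℕ, (g ^ s * x ^ i ≡ g ^ t * x ^ j [MOD p * q]) ↔
      (s + i ≡ t + j [MOD p - 1] ∧ s ≡ t [MOD q - 1]) := by
    intro s i t j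
    rw [← Nat.modEq_and_modEq_iff_modEq_mul hcop]
    have hmp : ∀ a b : ℕ, g ^ a * x ^ b ≡ g ^ (a + b) [MOD p] := by
      intro a b
      calc g ^ a * x ^ b ≡ g ^ a * g ^ b [MOD p] :=
            Nat.ModEq.mul_left _ (hxp'.pow b)
        _ = g ^ (a + b) := (pow_add g a b).symm
    have hmq : ∀ a b : ℕ, g ^ a * x ^ b ≡ g ^ a [MOD q] := by
      intro a b
      calc g ^ a * x ^ b ≡ g ^ a * 1 ^ b [MOD q] :=
            Nat.ModEq.mul_left _ (hxq'.pow b)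
        _ = g ^ a := by ring
    constructor
    · rintro ⟨h1, h2⟩
      refine ⟨?_, ?_⟩
      · exact (whiteman_pow_modEq p hp g hgp _ _).mp
          (((hmp s i).symm.trans h1).trans (hmp t j))
      · exact (whiteman_pow_modEq q hq g hgq _ _).mp
          (((hmq s i).symm.trans h2).trans (hmq t j))
    · rintro ⟨h1, h2⟩
      refine ⟨?_, ?_⟩
      · exact ((hmp s i).trans ((whiteman_pow_modEq p hp g hgp _ _).mpr h1)).trans
          (hmp t j).symm
      · exact ((hmq s i).trans ((whiteman_pow_modEq q hq g hgq _ _).mpr h2)).trans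
          (hmq t j).symm
  -- injectivity on range e
  have hinj : ∀ i, Set.InjOn (fun s => g ^ s * x ^ i % (p * q)) (Finset.range e) := by
    intro i s hs t ht hst
    simp only [Finset.coe_range, Set.mem_Iio] at hs ht
    have hmod : g ^ s * x ^ i ≡ g ^ t * x ^ i [MOD p * q] := hst
    obtain ⟨h1, h2⟩ := (key s i t i).mp hmod
    have h1' : s ≡ t [MOD p - 1] := by
      have := h1.add_right_cancel' i
      simpa using this
    -- conclude s = t using lcm
    rcases le_total s t with hle | hle
    · have d1 : (p - 1) ∣ t - s := (Nat.modEq_iff_dvd' hle).mp h1'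
      have d2 : (q - 1) ∣ t - s := (Nat.modEq_iff_dvd' hle).mp h2
      have hd := Nat.lcm_dvd d1 d2
      rw [hlcm] at hd
      rcases Nat.eq_zero_of_dvd_of_lt hd (by omega) with h
      omega
    · have d1 : (p - 1) ∣ s - t := (Nat.modEq_iff_dvd' hle).mp h1'.symm
      have d2 : (q - 1) ∣ s - t := (Nat.modEq_iff_dvd' hle).mp h2.symm
      have hd := Nat.lcm_dvd d1 d2
      rw [hlcm] at hd
      rcases Nat.eq_zero_of_dvd_of_lt hd (by omega) with h
      omega
  have hcard : ∀ i, (D i).card = e := by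
    intro i
    rw [hD i, Finset.card_image_of_injOn (hinj i), Finset.card_range]
  -- disjointness
  have hdisj : D 0 ∩ D 1 = ∅ := by
    rw [Finset.eq_empty_iff_forall_notMem]
    intro a ha
    rw [Finset.mem_inter, hD 0, hD 1, Finset.mem_image, Finset.mem_image] at ha
    obtain ⟨⟨s, _, hs⟩, ⟨t, _, ht⟩⟩ := ha
    have hmod : g ^ s * x ^ 0 ≡ g ^ t * x ^ 1 [MOD p * q] := by
      show _ % _ = _ % _
      rw [hs, ht]
    obtain ⟨h1, h2⟩ := (key s 0 t 1).mp hmod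
    have h1' : s ≡ t + 1 [MOD 2] := h1.of_dvd hpeven
    have h2' : s ≡ t [MOD 2] := h2.of_dvd hqeven
    have : t ≡ t + 1 [MOD 2] := h2'.symm.trans h1'
    have := (Nat.modEq_iff_dvd' (by omega)).mp this
    omega
  -- coprimality of elements
  haveI : Fact p.Prime := ⟨hp⟩
  haveI : Fact q.Prime := ⟨hq⟩
  have hgcp : Nat.Coprime g p := by
    rw [Nat.coprime_comm, hp.coprime_iff_not_dvd]
    intro hdvd
    have h0 : (g : ZMod p) = 0 := (ZMod.natCast_eq_zero_iff g p).mpr hdvd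
    have hu := hgp.isUnit (by omega)
    rw [h0] at hu
    exact not_isUnit_zero hu
  have hgcq : Nat.Coprime g q := by
    rw [Nat.coprime_comm, hq.coprime_iff_not_dvd]
    intro hdvd
    have h0 : (g : ZMod q) = 0 := (ZMod.natCast_eq_zero_iff g q).mpr hdvd
    have hu := hgq.isUnit (by omega)
    rw [h0] at hu
    exact not_isUnit_zero hu
  have hxcp : Nat.Coprime x p := by
    rw [Nat.coprime_comm, hp.coprime_iff_not_dvd]
    intro hdvd
    have h0 : x % p = 0 := Nat.dvd_iff_mod_eq_zero.mp hdvd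
    have hdg : p ∣ g := Nat.dvd_of_mod_eq_zero (by omega)
    exact (hp.coprime_iff_not_dvd.mp hgcp.symm) hdg
  have hxcq : Nat.Coprime x q := by
    rw [Nat.coprime_comm, hq.coprime_iff_not_dvd]
    intro hdvd
    have : x % q = 0 := Nat.dvd_iff_mod_eq_zero.mp hdvd
    omega
  have hmemcp : ∀ s i : ℕ, Nat.Coprime (g ^ s * x ^ i % (p * q)) (p * q) := by
    intro s i
    rw [whiteman_cop_mod]
    exact Nat.Coprime.mul
      (Nat.Coprime.mul_right (hgcp.pow_left s) (hgcq.pow_left s))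
      (Nat.Coprime.mul_right (hxcp.pow_left i) (hxcq.pow_left i))
  -- sub set
  have hsub : D 0 ∪ D 1 ⊆ (Finset.range (p * q)).filter (fun a => Nat.Coprime a (p * q)) := by
    intro a ha
    rw [Finset.mem_union, hD 0, hD 1, Finset.mem_image, Finset.mem_image] at ha
    rw [Finset.mem_filter, Finset.mem_range]
    rcases ha with ⟨s, _, hs⟩ | ⟨s, _, hs⟩ <;>
      exact hs ▸ ⟨Nat.mod_lt _ hNpos, hmemcp s _⟩
  -- totient count
  have htot : ((Finset.range (p * q)).filter (fun a => Nat.Coprime a (p * q))).card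
      = (p - 1) * (q - 1) := by
    have h1 : ((Finset.range (p * q)).filter (fun a => Nat.Coprime a (p * q))).card
        = (p * q).totient := by
      rw [Nat.totient]
      congr 1
      apply Finset.filter_congr
      intro a _
      simp [Nat.coprime_comm]
    rw [h1, Nat.totient_mul hcop, Nat.totient_prime hp, Nat.totient_prime hq]
  have hucard : (D 0 ∪ D 1).card = (p - 1) * (q - 1) := by
    rw [Finset.card_union_of_disjoint (Finset.disjoint_iff_inter_eq_empty.mpr hdisj),
      hcard 0, hcard 1]
    omega
  have hunion : (Finset.range (p * q)).filter (fun a => Nat.Coprime a (p * q)) = D 0 ∪ D 1 :=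
    (Finset.eq_of_subset_of_card_le hsub (by rw [htot, hucard])).symm
  exact ⟨hunion, hdisj, hcard 0, hcard 1⟩
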